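/- Let Ω be a properly convex open set and γ ∈ Aut(Ω). If for some x ∈ Ω the sequence (γⁿ·x) converges to an extremal point p ∈ ∂Ω, then the sequence of maps (γⁿ) converges to the constant map p uniformly on compact subsets of Ω. -/

import Mathlib

open Set Filter Projectivization MeasureTheory

/-- The real vector space `ℝ^{n+1}` underlying the projective space `P^n`. -/
abbrev PV (n : ℕ) := Fin (n+1) → ℝ

/-- The real projective space `P^n = P(ℝ^{n+1})`. -/
abbrev PS (n : ℕ) := Projectivization ℝ (PV n)

/-- The quotient topology on projective space. -/
noncomputable instance (n : ℕ) : TopologicalSpace (PS n) :=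
  TopologicalSpace.coinduced (Projectivization.mk' ℝ) inferInstance

/-- `SL_{n+1}(ℝ)`, the group of projective transformations of `P^n`. -/
abbrev SL (n : ℕ) := Matrix.SpecialLinearGroup (Fin (n+1)) ℝ

instance (n : ℕ) : TopologicalSpace (SL n) :=
  TopologicalSpace.induced (fun g => (g : Matrix (Fin (n+1)) (Fin (n+1)) ℝ)) inferInstance

/-- The action of `SL_{n+1}(ℝ)` on `P^n` by projective transformations. -/
noncomputable def pact {n : ℕ} (g : SL n) (x : PS n) : PS n :=
  Projectivization.mk ℝ ((g : Matrix (Fin (n+1)) (Fin (n+1)) ℝ).mulVec x.rep) (by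
    intro h
    apply x.rep_nonzero
    have h2 : ((g⁻¹ : SL n) : Matrix (Fin (n+1)) (Fin (n+1)) ℝ).mulVec
        (((g : SL n) : Matrix (Fin (n+1)) (Fin (n+1)) ℝ).mulVec x.rep) = x.rep := by
      rw [Matrix.mulVec_mulVec, ← Matrix.SpecialLinearGroup.coe_mul, inv_mul_cancel,
        Matrix.SpecialLinearGroup.coe_one, Matrix.one_mulVec]
    rw [← h2, h, Matrix.mulVec_zero])

/-- The Funk (asymmetric) distance of a convex set `S` in a real vector space,
expressed through the Minkowski gauge: `F(x,y) = - log (1 - gauge_{S-x}(y-x))`. -/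
noncomputable def funkDist {E : Type*} [AddCommGroup E] [Module ℝ E] (S : Set E) (x y : E) : ℝ :=
  - Real.log (1 - gauge ((fun z => z - x) '' S) (y - x))

/-- The Hilbert (cross-ratio) distance of a convex set `S` in a real vector space:
`d_S(x,y) = (1/2) log ([p:x:y:q])`, equal to the symmetrization of the Funk distance. -/
noncomputable def hilbertDist {E : Type*} [AddCommGroup E] [Module ℝ E] (S : Set E) (x y : E) : ℝ :=
  (funkDist S x y + funkDist S y x) / 2

/-- The affine chart of `P^n` associated with a linear form `f`: the point `x` is sent to
the representative `v` of `x` normalized so that `f v = 1` (well defined whenever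
`f` does not vanish on representatives of `x`). -/
noncomputable def chart {n : ℕ} (f : PV n →ₗ[ℝ] ℝ) (x : PS n) : PV n := (f x.rep)⁻¹ • x.rep

/-- `Ω` is a properly convex open subset of `P^n`, as witnessed by the affine chart given by
`f`: the closure of `Ω` avoids the projective hyperplane `{f = 0}`, and in the affine
chart `{f = 1}`, `Ω` is a bounded convex open set. -/
structure IsPCOWith {n : ℕ} (f : PV n →ₗ[ℝ] ℝ) (Ω : Set (PS n)) : Prop where
  nonempty : Ω.Nonempty
  isOpen : IsOpen Ω
  avoids : ∀ x ∈ closure Ω, f x.rep ≠ 0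
  convex : Convex ℝ (chart f '' Ω)
  bounded : Bornology.IsBounded (chart f '' Ω)

/-- The Hilbert distance on a properly convex open set `Ω ⊆ P^n`, computed in the affine
chart given by `f` (independent of the chart, by projective invariance of the cross-ratio). -/
noncomputable def phdist {n : ℕ} (f : PV n →ₗ[ℝ] ℝ) (Ω : Set (PS n)) (x y : PS n) : ℝ :=
  hilbertDist (chart f '' Ω) (chart f x) (chart f y)

/-- `g` preserves `Ω`, i.e. `g` belongs to `Aut(Ω)`. -/
def InAut {n : ℕ} (g : SL n) (Ω : Set (PS n)) : Prop := pact g '' Ω = Ω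

/-- `Ω` is strictly convex: its boundary `∂Ω` contains no nontrivial segment
(read in the affine chart given by `f`). -/
def StrictlyConvexW {n : ℕ} (f : PV n →ₗ[ℝ] ℝ) (Ω : Set (PS n)) : Prop :=
  ∀ p ∈ frontier Ω, ∀ q ∈ frontier Ω,
    segment ℝ (chart f p) (chart f q) ⊆ chart f '' (frontier Ω) → p = q

/-- `∂Ω` is of class `C¹`: at every boundary point the supporting affine hyperplane of `Ω`
(in the affine chart given by `f`) is unique, i.e. any two supporting linear forms agree up
to positive scaling and adding a multiple of `f`. -/
def C1BoundaryW {n : ℕ} (f : PV n →ₗ[ℝ] ℝ) (Ω : Set (PS n)) : Prop :=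
  ∀ p ∈ frontier Ω, ∀ u v : PV n →ₗ[ℝ] ℝ,
    (∀ y ∈ Ω, u (chart f y) < u (chart f p)) → (∀ y ∈ Ω, v (chart f y) < v (chart f p)) →
    ∃ c d : ℝ, 0 < c ∧ v = c • u + d • f

/-- `p` is an extremal point of `∂Ω`: it is not in the interior of any nontrivial
segment contained in `∂Ω` (read in the affine chart given by `f`). -/
def IsExtremalPointW {n : ℕ} (f : PV n →ₗ[ℝ] ℝ) (Ω : Set (PS n)) (p : PS n) : Prop :=
  p ∈ frontier Ω ∧ ∀ q ∈ frontier Ω, ∀ r ∈ frontier Ω,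
    chart f p ∈ openSegment ℝ (chart f q) (chart f r) → q = r

/-- The translation distance `τ(g) = inf_{x ∈ Ω} d_Ω(x, g x)`. -/
noncomputable def transDist {n : ℕ} (f : PV n →ₗ[ℝ] ℝ) (Ω : Set (PS n)) (g : SL n) : ℝ :=
  ⨅ x : Ω, phdist f Ω x.1 (pact g x.1)

/-- `g` is elliptic: it fixes a point of `Ω`. -/
def IsEllipticW {n : ℕ} (Ω : Set (PS n)) (g : SL n) : Prop := ∃ x ∈ Ω, pact g x = x

/-- `g` is hyperbolic: its translation distance is positive and attained. -/
def IsHyperbolicW {n : ℕ} (f : PV n →ₗ[ℝ] ℝ) (Ω : Set (PS n)) (g : SL n) : Prop :=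
  ∃ m : ℝ, 0 < m ∧ (∀ y ∈ Ω, m ≤ phdist f Ω y (pact g y)) ∧
    ∃ x₀ ∈ Ω, phdist f Ω x₀ (pact g x₀) = m

/-- `g` is parabolic: its translation distance is `0` and is not attained. -/
def IsParabolicW {n : ℕ} (f : PV n →ₗ[ℝ] ℝ) (Ω : Set (PS n)) (g : SL n) : Prop :=
  (∀ y ∈ Ω, 0 < phdist f Ω y (pact g y)) ∧
    ∀ ε : ℝ, 0 < ε → ∃ y ∈ Ω, phdist f Ω y (pact g y) < ε

section Aux

variable {n : ℕ} (f : PV n →ₗ[ℝ] ℝ)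

lemma normalize_smul (c : ℝ) (v : PV n) (hc : c ≠ 0) :
    (f (c • v))⁻¹ • (c • v) = (f v)⁻¹ • v := by
  have h1 : f (c • v) = c * f v := by simp
  rw [h1, smul_smul]
  rcases eq_or_ne (f v) 0 with h0 | h0
  · simp [h0]
  · congr 1
    field_simp

lemma chart_mk (v : PV n) (hv : v ≠ 0) :
    chart f (Projectivization.mk ℝ v hv) = (f v)⁻¹ • v := by
  obtain ⟨a, ha⟩ := Projectivization.exists_smul_eq_mk_rep ℝ v hv
  show (f (Projectivization.mk ℝ v hv).rep)⁻¹ • (Projectivization.mk ℝ v hv).rep = _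
  rw [← ha, Units.smul_def]
  exact normalize_smul f _ v a.ne_zero

lemma chart_ne_zero (z : PS n) (hz : f z.rep ≠ 0) : chart f z ≠ 0 :=
  smul_ne_zero (inv_ne_zero hz) z.rep_nonzero

lemma mk_chart (z : PS n) (hz : f z.rep ≠ 0) :
    Projectivization.mk ℝ (chart f z) (chart_ne_zero f z hz) = z := by
  conv_rhs => rw [← z.mk_rep]
  rw [Projectivization.mk_eq_mk_iff]
  exact ⟨Units.mk0 (f z.rep)⁻¹ (inv_ne_zero hz), rfl⟩

lemma f_chart (z : PS n) (hz : f z.rep ≠ 0) : f (chart f z) = 1 := by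
  simp [chart, _root_.map_smul, smul_eq_mul, inv_mul_cancel₀ hz]

lemma mulVec_ne_zero (g : SL n) {v : PV n} (hv : v ≠ 0) :
    (g : Matrix (Fin (n+1)) (Fin (n+1)) ℝ).mulVec v ≠ 0 := by
  intro h
  apply hv
  have h2 : ((g⁻¹ : SL n) : Matrix (Fin (n+1)) (Fin (n+1)) ℝ).mulVec
      (((g : SL n) : Matrix (Fin (n+1)) (Fin (n+1)) ℝ).mulVec v) = v := by
    rw [Matrix.mulVec_mulVec, ← Matrix.SpecialLinearGroup.coe_mul, inv_mul_cancel,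
      Matrix.SpecialLinearGroup.coe_one, Matrix.one_mulVec]
  rw [← h2, h, Matrix.mulVec_zero]

lemma pact_mk (g : SL n) (v : PV n) (hv : v ≠ 0) :
    pact g (Projectivization.mk ℝ v hv) =
      Projectivization.mk ℝ ((g : Matrix (Fin (n+1)) (Fin (n+1)) ℝ).mulVec v)
        (mulVec_ne_zero g hv) := by
  unfold pact
  rw [Projectivization.mk_eq_mk_iff]
  obtain ⟨a, ha⟩ := Projectivization.exists_smul_eq_mk_rep ℝ v hv
  refine ⟨a, ?_⟩
  rw [← ha, Units.smul_def, Units.smul_def, Matrix.mulVec_smul]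

lemma pact_one (x : PS n) : pact 1 x = x := by
  unfold pact
  conv_rhs => rw [← x.mk_rep]
  congr 1
  rw [Matrix.SpecialLinearGroup.coe_one, Matrix.one_mulVec]

lemma pact_mul (g h : SL n) (x : PS n) : pact (g * h) x = pact g (pact h x) := by
  have : pact h x = Projectivization.mk ℝ _ _ := rfl
  rw [this, pact_mk]
  unfold pact
  congr 1
  rw [Matrix.mulVec_mulVec, ← Matrix.SpecialLinearGroup.coe_mul]

lemma InAut.mem {g : SL n} {Ω : Set (PS n)} (h : InAut g Ω) {x : PS n} (hx : x ∈ Ω) :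
    pact g x ∈ Ω := by
  exact h ▸ Set.mem_image_of_mem _ hx

lemma InAut.pow_mem {γ : SL n} {Ω : Set (PS n)} (h : InAut γ Ω) (m : ℕ) {x : PS n}
    (hx : x ∈ Ω) : pact (γ ^ m) x ∈ Ω := by
  induction m with
  | zero => rwa [pow_zero, pact_one]
  | succ m ih => rw [pow_succ', pact_mul]; exact h.mem ih

end Aux

section Topo

variable {n : ℕ}

lemma isOpenMap_mk' (n : ℕ) :
    IsOpenMap (Projectivization.mk' ℝ : {v : PV n // v ≠ 0} → PS n) := by
  intro U hU
  rw [isOpen_coinduced]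
  have hVopen : IsOpen (Subtype.val '' U : Set (PV n)) :=
    (isOpen_compl_singleton (x := (0 : PV n))).isOpenMap_subtype_val U hU
  have key : (Projectivization.mk' ℝ) ⁻¹' ((Projectivization.mk' ℝ) '' U) =
      Subtype.val ⁻¹' (⋃ c : ℝˣ, (fun w : PV n => (c : ℝ) • w) '' (Subtype.val '' U)) := by
    ext u
    simp only [Set.mem_preimage, Set.mem_image, Set.mem_iUnion]
    constructor
    · rintro ⟨u', hu', he⟩
      rw [Projectivization.mk'_eq_mk, Projectivization.mk'_eq_mk,
        Projectivization.mk_eq_mk_iff] at he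
      obtain ⟨a, ha⟩ := he
      refine ⟨a⁻¹, u'.val, ⟨u', hu', rfl⟩, ?_⟩
      rw [← ha]
      simp [Units.smul_def, smul_smul]
    · rintro ⟨c, w, ⟨u', hu', rfl⟩, hw⟩
      refine ⟨u', hu', ?_⟩
      rw [Projectivization.mk'_eq_mk, Projectivization.mk'_eq_mk,
        Projectivization.mk_eq_mk_iff]
      refine ⟨c⁻¹, ?_⟩
      rw [← hw]
      simp [Units.smul_def, smul_smul]
  rw [key]
  refine IsOpen.preimage continuous_subtype_val (isOpen_iUnion fun c => ?_)
  exact isOpenMap_smul₀ (Units.ne_zero c) _ hVopen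

lemma continuous_mk' (n : ℕ) :
    Continuous (Projectivization.mk' ℝ : {v : PV n // v ≠ 0} → PS n) :=
  continuous_coinduced_rng

lemma continuousAt_chart (f : PV n →ₗ[ℝ] ℝ) (z : PS n) (hz : f z.rep ≠ 0) :
    ContinuousAt (chart f) z := by
  have hfc : Continuous f := f.continuous_of_finiteDimensional
  have hrep : z = Projectivization.mk' ℝ ⟨z.rep, z.rep_nonzero⟩ := by
    rw [Projectivization.mk'_eq_mk]; exact (z.mk_rep).symm
  unfold ContinuousAt
  rw [hrep]
  refine Filter.Tendsto.mono_left ?_ ((isOpenMap_mk' n).nhds_le _)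
  rw [Filter.tendsto_map'_iff]
  have hfun : (chart f ∘ (Projectivization.mk' ℝ) : {v : PV n // v ≠ 0} → PV n)
      = fun u => (f u.val)⁻¹ • u.val := by
    funext u
    rw [Function.comp_apply, Projectivization.mk'_eq_mk, chart_mk]
  have hval : chart f (Projectivization.mk' ℝ ⟨z.rep, z.rep_nonzero⟩)
      = (f z.rep)⁻¹ • z.rep := by
    rw [Projectivization.mk'_eq_mk, chart_mk]
  rw [hfun, hval]
  have h1 : ContinuousAt (fun u : {v : PV n // v ≠ 0} => (f u.val)⁻¹ • u.val)
      ⟨z.rep, z.rep_nonzero⟩ := by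
    refine ContinuousAt.smul (f := fun u : {v : PV n // v ≠ 0} => (f u.val)⁻¹)
      (g := fun u : {v : PV n // v ≠ 0} => u.val) ?_ ?_
    · exact ContinuousAt.inv₀ (hfc.continuousAt.comp continuousAt_subtype_val) hz
    · exact continuousAt_subtype_val
  exact h1

lemma tendsto_mk {u : ℕ → PV n} {a : PV n} (hu : ∀ j, u j ≠ 0) (ha : a ≠ 0)
    (h : Filter.Tendsto u Filter.atTop (nhds a)) :
    Filter.Tendsto (fun j => Projectivization.mk ℝ (u j) (hu j)) Filter.atTop
      (nhds (Projectivization.mk ℝ a ha)) := by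
  have h1 : Filter.Tendsto (fun j => (⟨u j, hu j⟩ : {v : PV n // v ≠ 0})) Filter.atTop
      (nhds ⟨a, ha⟩) := by
    rw [nhds_subtype_eq_comap, Filter.tendsto_comap_iff]
    exact h
  have h2 := ((continuous_mk' n).tendsto ⟨a, ha⟩).comp h1
  simpa [Function.comp_def, Projectivization.mk'_eq_mk] using h2

end Topo

open scoped Pointwise

section Geom

variable {n : ℕ} {f : PV n →ₗ[ℝ] ℝ} {Ω : Set (PS n)}

lemma mem_chartImage_iff (hΩ : IsPCOWith f Ω) {v : PV n} :
    v ∈ chart f '' Ω ↔ f v = 1 ∧ ∃ hv : v ≠ 0, Projectivization.mk ℝ v hv ∈ Ω := by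
  constructor
  · rintro ⟨u, hu, rfl⟩
    have hz : f u.rep ≠ 0 := hΩ.avoids u (subset_closure hu)
    refine ⟨f_chart f u hz, chart_ne_zero f u hz, ?_⟩
    rw [mk_chart f u hz]
    exact hu
  · rintro ⟨hv1, hv, hmem⟩
    refine ⟨_, hmem, ?_⟩
    rw [chart_mk, hv1]
    simp

lemma f_eq_one_of_mem (hΩ : IsPCOWith f Ω) {v : PV n} (hv : v ∈ chart f '' Ω) : f v = 1 :=
  ((mem_chartImage_iff hΩ).1 hv).1

lemma f_eq_one_of_closure (hΩ : IsPCOWith f Ω) {v : PV n}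
    (hv : v ∈ closure (chart f '' Ω)) : f v = 1 := by
  have hc : closure (chart f '' Ω) ⊆ f ⁻¹' {1} :=
    closure_minimal (fun u hu => f_eq_one_of_mem hΩ hu)
      (IsClosed.preimage f.continuous_of_finiteDimensional isClosed_singleton)
  exact hc hv

lemma ne_zero_of_closure (hΩ : IsPCOWith f Ω) {v : PV n}
    (hv : v ∈ closure (chart f '' Ω)) : v ≠ 0 := by
  intro h
  have := f_eq_one_of_closure hΩ hv
  rw [h] at this
  simp at this

lemma relOpen (hΩ : IsPCOWith f Ω) {x : PV n} (hx : x ∈ chart f '' Ω) :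
    ∃ δ > 0, ∀ u : PV n, f u = 1 → dist u x < δ → u ∈ chart f '' Ω := by
  have hO : IsOpen (Subtype.val '' ((Projectivization.mk' ℝ) ⁻¹' Ω) : Set (PV n)) :=
    (isOpen_compl_singleton (x := (0 : PV n))).isOpenMap_subtype_val _
      ((continuous_mk' n).isOpen_preimage Ω hΩ.isOpen)
  obtain ⟨hx1, hxne, hxmem⟩ := (mem_chartImage_iff hΩ).1 hx
  have hxO : x ∈ (Subtype.val '' ((Projectivization.mk' ℝ) ⁻¹' Ω) : Set (PV n)) := by
    refine ⟨⟨x, hxne⟩, ?_, rfl⟩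
    simpa [Set.mem_preimage, Projectivization.mk'_eq_mk] using hxmem
  obtain ⟨δ, hδ, hball⟩ := Metric.isOpen_iff.1 hO x hxO
  refine ⟨δ, hδ, fun u hu1 hud => ?_⟩
  have huO := hball (Metric.mem_ball.2 hud)
  obtain ⟨⟨u', hu'⟩, humem, heq⟩ := huO
  rw [mem_chartImage_iff hΩ]
  refine ⟨hu1, ?_⟩
  subst heq
  exact ⟨hu', by simpa [Set.mem_preimage, Projectivization.mk'_eq_mk] using humem⟩

lemma seg_mem (hΩ : IsPCOWith f Ω) {x z : PV n} (hx : x ∈ chart f '' Ω)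
    (hz : z ∈ closure (chart f '' Ω)) {t : ℝ} (ht0 : 0 ≤ t) (ht1 : t < 1) :
    x + t • (z - x) ∈ chart f '' Ω := by
  rcases eq_or_lt_of_le ht0 with h0 | ht0'
  · rw [← h0]; simpa using hx
  obtain ⟨δ, hδ, hball⟩ := relOpen hΩ hx
  have h1tp : (0:ℝ) < 1 - t := by linarith
  obtain ⟨z', hz', hclose⟩ := Metric.mem_closure_iff.mp hz (δ * (1 - t) / t)
    (by positivity)
  set y' : PV n := x + (t / (1 - t)) • (z - z') with hy'def
  have h1t : (1 : ℝ) - t ≠ 0 := ne_of_gt h1tp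
  have htdiv : (0:ℝ) < t / (1 - t) := div_pos ht0' h1tp
  have hy' : y' ∈ chart f '' Ω := by
    apply hball
    · have hfx : f x = 1 := f_eq_one_of_mem hΩ hx
      have hfz : f z = 1 := f_eq_one_of_closure hΩ hz
      have hfz' : f z' = 1 := f_eq_one_of_mem hΩ hz'
      simp [hy'def, map_add, _root_.map_smul, map_sub, hfx, hfz, hfz', smul_eq_mul]
    · have : dist y' x = (t / (1 - t)) * dist z z' := by
        rw [hy'def, dist_eq_norm, add_sub_cancel_left, norm_smul, dist_eq_norm]
        congr 1
        rw [Real.norm_eq_abs, abs_of_pos htdiv]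
      rw [this]
      calc (t / (1 - t)) * dist z z' < (t / (1 - t)) * (δ * (1 - t) / t) :=
            mul_lt_mul_of_pos_left hclose htdiv
        _ = δ := by
            field_simp
  have hcomb : x + t • (z - x) = (1 - t) • y' + t • z' := by
    have hc : (1 - t) * (t / (1 - t)) = t := by field_simp
    simp only [hy'def, smul_add, smul_smul, hc, smul_sub]
    module
  rw [hcomb]
  exact hΩ.convex hy' hz' (by linarith) ht0 (by ring)

lemma exists_bound (hΩ : IsPCOWith f Ω) :
    ∃ D > 0, ∀ v ∈ closure (chart f '' Ω), ‖v‖ ≤ D := by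
  obtain ⟨r, hr⟩ := hΩ.bounded.subset_closedBall 0
  refine ⟨max r 1, lt_of_lt_of_le one_pos (le_max_right _ _), fun v hv => ?_⟩
  have : closure (chart f '' Ω) ⊆ Metric.closedBall 0 (max r 1) :=
    closure_minimal (hr.trans (Metric.closedBall_subset_closedBall (le_max_left _ _)))
      Metric.isClosed_closedBall
  simpa [Metric.mem_closedBall, dist_zero_right] using this hv

lemma gauge_le_aux (hΩ : IsPCOWith f Ω) {x y : PV n} {r : ℝ} (hr : 0 < r)
    (hP : x + r⁻¹ • (y - x) ∈ chart f '' Ω) :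
    gauge ((fun z => z - x) '' (chart f '' Ω)) (y - x) ≤ r := by
  apply gauge_le_of_mem hr.le
  refine ⟨r⁻¹ • (y - x), ⟨x + r⁻¹ • (y - x), hP, add_sub_cancel_left _ _⟩, ?_⟩
  show r • (r⁻¹ • (y - x)) = y - x
  rw [smul_smul, mul_inv_cancel₀ hr.ne', one_smul]

lemma mem_of_gauge_mem (hΩ : IsPCOWith f Ω) {x y : PV n} {r : ℝ} (hr : 0 < r)
    (h : y - x ∈ r • ((fun z => z - x) '' (chart f '' Ω))) :
    x + r⁻¹ • (y - x) ∈ chart f '' Ω := by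
  obtain ⟨w, ⟨P, hP, rfl⟩, hw⟩ := h
  have : x + r⁻¹ • (y - x) = P := by
    show x + r⁻¹ • (y - x) = P
    have hw' : r • (P - x) = y - x := hw
    rw [← hw', smul_smul, inv_mul_cancel₀ hr.ne', one_smul]
    abel
  rwa [this]

lemma gauge_lt_one (hΩ : IsPCOWith f Ω) {x y : PV n} (hx : x ∈ chart f '' Ω)
    (hy : y ∈ chart f '' Ω) :
    gauge ((fun z => z - x) '' (chart f '' Ω)) (y - x) < 1 := by
  rcases eq_or_ne y x with rfl | hne
  · simp only [sub_self]
    rw [gauge_zero]; norm_num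
  obtain ⟨δ, hδ, hball⟩ := relOpen hΩ hy
  set ε : ℝ := min (1/2) (δ / (2 * (‖y - x‖ + 1))) with hε
  have hyx : (0:ℝ) < ‖y - x‖ := by
    rw [norm_pos_iff]; exact sub_ne_zero_of_ne hne
  have hεpos : 0 < ε := by
    apply lt_min (by norm_num)
    positivity
  have hP : x + (1 + ε)⁻¹⁻¹ • (y - x) ∈ chart f '' Ω := by
    rw [inv_inv]
    apply hball
    · have hfx : f x = 1 := f_eq_one_of_mem hΩ hx
      have hfy : f y = 1 := f_eq_one_of_mem hΩ hy
      simp [map_add, _root_.map_smul, map_sub, hfx, hfy, smul_eq_mul]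
    · have hpt : x + (1 + ε) • (y - x) = y + ε • (y - x) := by
        rw [add_smul, one_smul]
        abel
      rw [hpt, dist_eq_norm, add_sub_cancel_left, norm_smul, Real.norm_eq_abs,
        abs_of_pos hεpos]
      have hεle : ε ≤ δ / (2 * (‖y - x‖ + 1)) := min_le_right _ _
      calc ε * ‖y - x‖ ≤ (δ / (2 * (‖y - x‖ + 1))) * ‖y - x‖ :=
            mul_le_mul_of_nonneg_right hεle (norm_nonneg _)
        _ < δ := by
            rw [div_mul_eq_mul_div, div_lt_iff₀ (by positivity)]
            nlinarith [norm_nonneg (y - x)]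
  have := gauge_le_aux hΩ (r := (1 + ε)⁻¹) (by positivity) hP
  apply lt_of_le_of_lt this
  exact inv_lt_one_of_one_lt₀ (by linarith)

lemma gauge_pos_aux (hΩ : IsPCOWith f Ω) {D : ℝ} (hD : ∀ v ∈ closure (chart f '' Ω), ‖v‖ ≤ D)
    {x y : PV n} (hx : x ∈ chart f '' Ω) (hy : y ∈ chart f '' Ω) :
    ‖y - x‖ / (2 * D + 1) ≤ gauge ((fun z => z - x) '' (chart f '' Ω)) (y - x) := by
  have hD0 : 0 < D := lt_of_lt_of_le (norm_pos_iff.2 (ne_zero_of_closure hΩ (subset_closure hx)))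
    (hD x (subset_closure hx))
  apply le_csInf
  · exact ⟨1, by norm_num, ⟨y - x, ⟨y, hy, rfl⟩, one_smul _ _⟩⟩
  · rintro r ⟨hr, w, ⟨P, hP, rfl⟩, hw⟩
    have hnorm : ‖y - x‖ ≤ r * (2 * D + 1) := by
      rw [← hw, norm_smul, Real.norm_eq_abs, abs_of_pos hr]
      apply mul_le_mul_of_nonneg_left _ hr.le
      calc ‖P - x‖ ≤ ‖P‖ + ‖x‖ := norm_sub_le _ _
        _ ≤ D + D := add_le_add (hD P (subset_closure hP)) (hD x (subset_closure hx))
        _ ≤ 2 * D + 1 := by linarith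
    rw [div_le_iff₀ (by positivity)]
    exact hnorm

end Geom

section Cone

variable {n : ℕ} {f : PV n →ₗ[ℝ] ℝ} {Ω : Set (PS n)}

def coneC (f : PV n →ₗ[ℝ] ℝ) (Ω : Set (PS n)) : Set (PV n) :=
  {v | 0 < f v ∧ (f v)⁻¹ • v ∈ chart f '' Ω}

lemma smul_mem_coneC {v : PV n} (hv : v ∈ coneC f Ω) {t : ℝ} (ht : 0 < t) :
    t • v ∈ coneC f Ω := by
  obtain ⟨h1, h2⟩ := hv
  constructor
  · show 0 < f (t • v)
    rw [_root_.map_smul, smul_eq_mul]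
    positivity
  · show (f (t • v))⁻¹ • (t • v) ∈ _
    rw [normalize_smul f t v (ne_of_gt ht)]
    exact h2

lemma mem_coneC_of_S (hΩ : IsPCOWith f Ω) {v : PV n} (hv : v ∈ chart f '' Ω) :
    v ∈ coneC f Ω := by
  have h1 : f v = 1 := f_eq_one_of_mem hΩ hv
  refine ⟨by rw [h1]; norm_num, ?_⟩
  rw [h1]
  simpa using hv

lemma smul_closure_S_mem (hΩ : IsPCOWith f Ω) {z : PV n}
    (hz : z ∈ closure (chart f '' Ω)) {t : ℝ} (ht : 0 < t) :
    t • z ∈ closure (coneC f Ω) := by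
  obtain ⟨u, hu, hlim⟩ := mem_closure_iff_seq_limit.1 hz
  exact mem_closure_of_tendsto (hlim.const_smul t)
    (Filter.Eventually.of_forall fun j => smul_mem_coneC (mem_coneC_of_S hΩ (hu j)) ht)

lemma smul_mem_closure_coneC {v : PV n} (hv : v ∈ closure (coneC f Ω)) {t : ℝ}
    (ht : 0 < t) : t • v ∈ closure (coneC f Ω) := by
  obtain ⟨u, hu, hlim⟩ := mem_closure_iff_seq_limit.1 hv
  exact mem_closure_of_tendsto (hlim.const_smul t)
    (Filter.Eventually.of_forall fun j => smul_mem_coneC (hu j) ht)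

lemma zero_mem_closure_coneC (hΩ : IsPCOWith f Ω) : (0 : PV n) ∈ closure (coneC f Ω) := by
  obtain ⟨z, hz⟩ := hΩ.nonempty
  have hzS : chart f z ∈ chart f '' Ω := Set.mem_image_of_mem _ hz
  have hlim : Filter.Tendsto (fun j : ℕ => (1 / (j + 1) : ℝ) • chart f z) Filter.atTop
      (nhds 0) := by
    have h1 : Filter.Tendsto (fun j : ℕ => (1 / (j + 1) : ℝ)) Filter.atTop (nhds 0) :=
      tendsto_one_div_add_atTop_nhds_zero_nat
    simpa using h1.smul_const (chart f z)
  exact mem_closure_of_tendsto hlim (Filter.Eventually.of_forall fun j =>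
    smul_mem_coneC (mem_coneC_of_S hΩ hzS) (by positivity))

lemma closure_coneC_bound (hΩ : IsPCOWith f Ω) {D : ℝ}
    (hD : ∀ v ∈ closure (chart f '' Ω), ‖v‖ ≤ D) {v : PV n}
    (hv : v ∈ closure (coneC f Ω)) : 0 ≤ f v ∧ ‖v‖ ≤ D * f v := by
  have hfc : Continuous f := f.continuous_of_finiteDimensional
  have hsub : closure (coneC f Ω) ⊆ {v | 0 ≤ f v ∧ ‖v‖ ≤ D * f v} := by
    apply closure_minimal
    · rintro w ⟨h1, h2⟩
      refine ⟨h1.le, ?_⟩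
      have hw : w = (f w) • ((f w)⁻¹ • w) := (smul_inv_smul₀ (ne_of_gt h1) w).symm
      calc ‖w‖ = ‖(f w) • ((f w)⁻¹ • w)‖ := by rw [← hw]
        _ = f w * ‖(f w)⁻¹ • w‖ := by rw [norm_smul, Real.norm_eq_abs, abs_of_pos h1]
        _ ≤ f w * D := mul_le_mul_of_nonneg_left (hD _ (subset_closure h2)) h1.le
        _ = D * f w := mul_comm _ _
    · rw [show {v : PV n | 0 ≤ f v ∧ ‖v‖ ≤ D * f v}
          = {v : PV n | 0 ≤ f v} ∩ {v : PV n | ‖v‖ ≤ D * f v} from rfl]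
      exact IsClosed.inter (isClosed_le continuous_const hfc)
        (isClosed_le continuous_norm (continuous_const.mul hfc))
  exact hsub hv

lemma normalized_mem_closure (hΩ : IsPCOWith f Ω) {v : PV n}
    (hv : v ∈ closure (coneC f Ω)) (hfv : 0 < f v) :
    (f v)⁻¹ • v ∈ closure (chart f '' Ω) := by
  obtain ⟨u, hu, hlim⟩ := mem_closure_iff_seq_limit.1 hv
  have hfc : Continuous f := f.continuous_of_finiteDimensional
  have hcont : ContinuousAt (fun w : PV n => (f w)⁻¹ • w) v :=
    ContinuousAt.smul (ContinuousAt.inv₀ hfc.continuousAt (ne_of_gt hfv)) continuousAt_id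
  exact mem_closure_of_tendsto (hcont.tendsto.comp hlim)
    (Filter.Eventually.of_forall fun j => (hu j).2)

lemma gauge_endpoint_mem_closure (hΩ : IsPCOWith f Ω) {x y : PV n}
    (hx : x ∈ chart f '' Ω) (hy : y ∈ chart f '' Ω)
    (hgpos : 0 < gauge ((fun z => z - x) '' (chart f '' Ω)) (y - x)) :
    x + (gauge ((fun z => z - x) '' (chart f '' Ω)) (y - x))⁻¹ • (y - x)
      ∈ closure (chart f '' Ω) := by
  set S := chart f '' Ω with hS
  set g := gauge ((fun z => z - x) '' S) (y - x) with hg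
  show x + g⁻¹ • (y - x) ∈ closure S
  rw [Metric.mem_closure_iff]
  intro ε hε
  set ν : ℝ := min g (ε * g ^ 2 / (‖y - x‖ + 1)) with hν
  have hνpos : 0 < ν := by
    apply lt_min hgpos
    positivity
  have hgset : {r : ℝ | 0 < r ∧ y - x ∈ r • ((fun z => z - x) '' S)}.Nonempty := by
    refine ⟨1, by norm_num, ?_⟩
    refine ⟨y - x, ⟨y, hy, rfl⟩, one_smul _ _⟩
  obtain ⟨r, hrmem, hrlt⟩ := Real.lt_sInf_add_pos hgset hνpos
  obtain ⟨hr0, hrin⟩ := hrmem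
  have hgr : g ≤ r := by
    apply csInf_le ⟨0, fun b hb => hb.1.le⟩
    exact ⟨hr0, hrin⟩
  have hrg : r < g + ν := by
    have : sInf {r : ℝ | 0 < r ∧ y - x ∈ r • ((fun z => z - x) '' S)} = g := rfl
    rw [this] at hrlt
    exact hrlt
  refine ⟨x + r⁻¹ • (y - x), mem_of_gauge_mem hΩ hr0 hrin, ?_⟩
  have hdist : dist (x + g⁻¹ • (y - x)) (x + r⁻¹ • (y - x))
      = |g⁻¹ - r⁻¹| * ‖y - x‖ := by
    rw [dist_eq_norm]
    have : (x + g⁻¹ • (y - x)) - (x + r⁻¹ • (y - x)) = (g⁻¹ - r⁻¹) • (y - x) := by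
      rw [sub_smul]; abel
    rw [this, norm_smul, Real.norm_eq_abs]
  rw [hdist]
  have he : g⁻¹ - r⁻¹ = (r - g) / (g * r) := by
    field_simp
  have habs : |g⁻¹ - r⁻¹| ≤ ν / g ^ 2 := by
    rw [he, abs_of_nonneg (div_nonneg (sub_nonneg.2 hgr) (by positivity))]
    apply div_le_div₀ hνpos.le (by linarith) (by positivity)
    nlinarith [mul_le_mul_of_nonneg_left hgr hgpos.le]
  calc |g⁻¹ - r⁻¹| * ‖y - x‖ ≤ (ν / g ^ 2) * ‖y - x‖ :=
        mul_le_mul_of_nonneg_right habs (norm_nonneg _)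
    _ ≤ (ε / (‖y - x‖ + 1)) * ‖y - x‖ := by
        apply mul_le_mul_of_nonneg_right _ (norm_nonneg _)
        have h1 : ν / g ^ 2 ≤ (ε * g ^ 2 / (‖y - x‖ + 1)) / g ^ 2 := by
          gcongr
          exact min_le_right _ _
        have h2 : (ε * g ^ 2 / (‖y - x‖ + 1)) / g ^ 2 = ε / (‖y - x‖ + 1) := by
          field_simp
        linarith [h1, h2.symm.le, h2.le]
    _ < ε := by
        rw [div_mul_eq_mul_div, div_lt_iff₀ (by positivity)]
        nlinarith [hε, norm_nonneg (y - x)]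


lemma funk_eq (hΩ : IsPCOWith f Ω) {D : ℝ}
    (hD : ∀ v ∈ closure (chart f '' Ω), ‖v‖ ≤ D)
    {x y : PV n} (hx : x ∈ chart f '' Ω) (hy : y ∈ chart f '' Ω) :
    funkDist (chart f '' Ω) x y =
      Real.log (sInf {l : ℝ | l • y - x ∈ closure (coneC f Ω)}) ∧
    1 ≤ sInf {l : ℝ | l • y - x ∈ closure (coneC f Ω)} ∧
    {l : ℝ | l • y - x ∈ closure (coneC f Ω)}.Nonempty := by
  set S := chart f '' Ω with hS
  set A := {l : ℝ | l • y - x ∈ closure (coneC f Ω)} with hA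
  set g := gauge ((fun z => z - x) '' S) (y - x) with hg
  have hfx : f x = 1 := f_eq_one_of_mem hΩ hx
  have hfy : f y = 1 := f_eq_one_of_mem hΩ hy
  have hg1 : g < 1 := gauge_lt_one hΩ hx hy
  have hg0 : 0 ≤ g := gauge_nonneg _
  have h1gpos : (0:ℝ) < 1 - g := by linarith
  -- lower bound for elements of A
  have claim_lb : ∀ l ∈ A, (1 - g)⁻¹ ≤ l := by
    intro l hl
    obtain ⟨hf0, hnorm⟩ := closure_coneC_bound hΩ hD hl
    have hfv : f (l • y - x) = l - 1 := by
      rw [map_sub, _root_.map_smul, hfx, hfy, smul_eq_mul, mul_one]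
    rw [hfv] at hf0 hnorm
    have hl1 : 1 ≤ l := by linarith
    rcases eq_or_lt_of_le hl1 with heq | hlgt
    · -- l = 1 forces y = x
      have hyx : y = x := by
        have hz : ‖l • y - x‖ ≤ 0 := by rw [← heq] at hnorm ⊢; simpa using hnorm
        have : l • y - x = 0 := by
          rwa [norm_le_zero_iff] at hz
        have : (1:ℝ) • y - x = 0 := by rw [heq]; exact this
        simpa [sub_eq_zero] using this
      have hgz : g = 0 := by
        rw [hg, hyx, sub_self, gauge_zero]
      rw [hgz, ← heq]
      norm_num
    · -- 1 < l
      have hl1' : (0:ℝ) < l - 1 := by linarith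
      have hlne : l - 1 ≠ 0 := ne_of_gt hl1'
      have hz : (f (l • y - x))⁻¹ • (l • y - x) ∈ closure S :=
        normalized_mem_closure hΩ hl (by rw [hfv]; exact hl1')
      rw [hfv] at hz
      set σ : ℝ := l / (l - 1) with hσ
      have hσpos : 0 < σ := by positivity
      have hzeq : (l - 1)⁻¹ • (l • y - x) = x + σ • (y - x) := by
        rw [hσ]
        match_scalars <;> (field_simp; try ring)
      rw [hzeq] at hz
      have hkey : g ≤ σ⁻¹ := by
        by_contra hcon
        push_neg at hcon
        have hσg : 1 < σ * g := by
          have h2 := mul_lt_mul_of_pos_left hcon hσpos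
          rwa [mul_inv_cancel₀ (ne_of_gt hσpos)] at h2
        set θ : ℝ := ((σ * g)⁻¹ + 1) / 2 with hθ
        have hθinv : (σ * g)⁻¹ < 1 := inv_lt_one_of_one_lt₀ hσg
        have hθpos : 0 < θ := by
          have : 0 < (σ * g)⁻¹ := by positivity
          rw [hθ]; linarith
        have hθ1 : θ < 1 := by rw [hθ]; linarith
        have hmem : x + θ • ((x + σ • (y - x)) - x) ∈ S := seg_mem hΩ hx hz hθpos.le hθ1
        have hmem' : x + (θ * σ) • (y - x) ∈ S := by
          have : x + θ • ((x + σ • (y - x)) - x) = x + (θ * σ) • (y - x) := by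
            rw [add_sub_cancel_left, smul_smul]
          rwa [this] at hmem
        have hle := gauge_le_aux hΩ (r := (θ * σ)⁻¹) (by positivity)
          (by rwa [inv_inv])
        rw [← hg] at hle
        have hts : (0:ℝ) < θ * σ := by positivity
        have h3 : 1 < θ * σ * g := by
          have h2 : (σ * g)⁻¹ * (σ * g) = 1 := inv_mul_cancel₀ (by positivity)
          have hθgt : (σ * g)⁻¹ < θ := by rw [hθ]; linarith
          calc (1:ℝ) = (σ * g)⁻¹ * (σ * g) := h2.symm
            _ < θ * (σ * g) := mul_lt_mul_of_pos_right hθgt (by positivity)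
            _ = θ * σ * g := by ring
        have hcontr : (θ * σ)⁻¹ < g := by
          rw [inv_eq_one_div, div_lt_iff₀ hts]
          nlinarith [h3]
        linarith
      -- from g ≤ σ⁻¹ conclude (1-g)⁻¹ ≤ l
      have hlpos : (0:ℝ) < l := by linarith
      have hσinv : σ⁻¹ = 1 - l⁻¹ := by
        rw [hσ, inv_div]
        field_simp
      have hgle : g ≤ 1 - l⁻¹ := hσinv ▸ hkey
      have h1 : l⁻¹ ≤ 1 - g := by linarith
      calc (1 - g)⁻¹ ≤ (l⁻¹)⁻¹ :=
            inv_anti₀ (by positivity) h1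
        _ = l := inv_inv l
  -- membership of (1-g)⁻¹ in A
  have hAmem : (1 - g)⁻¹ ∈ A := by
    rcases eq_or_ne y x with rfl | hne
    · have hgz : g = 0 := by rw [hg, sub_self, gauge_zero]
      show (1 - g)⁻¹ • y - y ∈ closure (coneC f Ω)
      rw [hgz]
      norm_num
      exact zero_mem_closure_coneC hΩ
    · obtain ⟨D₂, hD₂pos, hD₂⟩ := exists_bound hΩ
      have hyx : (0:ℝ) < ‖y - x‖ := by rw [norm_pos_iff]; exact sub_ne_zero_of_ne hne
      have hgpos : 0 < g := by
        have := gauge_pos_aux hΩ hD₂ hx hy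
        rw [← hg] at this
        have hq : 0 < ‖y - x‖ / (2 * D₂ + 1) := by positivity
        linarith
      have hzcl : x + g⁻¹ • (y - x) ∈ closure S :=
        gauge_endpoint_mem_closure hΩ hx hy hgpos
      have hteq : (1 - g)⁻¹ • y - x = ((1 - g)⁻¹ * g) • (x + g⁻¹ • (y - x)) := by
        match_scalars <;> (field_simp; try ring)
      show (1 - g)⁻¹ • y - x ∈ closure (coneC f Ω)
      rw [hteq]
      exact smul_closure_S_mem hΩ hzcl (by positivity)
  -- conclusion
  have hAne : A.Nonempty := ⟨_, hAmem⟩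
  have hone : (1:ℝ) ≤ (1 - g)⁻¹ := (one_le_inv₀ h1gpos).2 (by linarith)
  have hsinf : sInf A = (1 - g)⁻¹ :=
    le_antisymm (csInf_le ⟨1, fun l hl => hone.trans (claim_lb l hl)⟩ hAmem)
      (le_csInf hAne claim_lb)
  refine ⟨?_, ?_, hAne⟩
  · rw [hsinf, Real.log_inv]
    show funkDist S x y = -Real.log (1 - g)
    unfold funkDist
    rw [← hg]
  · rw [hsinf]
    exact hone

end Cone

section Invariance

variable {n : ℕ} {f : PV n →ₗ[ℝ] ℝ} {Ω : Set (PS n)}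

lemma exists_sign (hΩ : IsPCOWith f Ω) {γ : SL n} (hγ : InAut γ Ω) :
    ∃ s : ℝ, s ≠ 0 ∧
      ∀ w ∈ chart f '' Ω,
        0 < s * f ((γ : Matrix (Fin (n+1)) (Fin (n+1)) ℝ).mulVec w) := by
  set M := (γ : Matrix (Fin (n+1)) (Fin (n+1)) ℝ) with hM
  set φ : PV n → ℝ := fun w => f (M.mulVec w) with hφ
  have hφcont : Continuous φ := by
    have he : φ = f ∘ M.mulVecLin := by
      funext w
      simp [hφ, Matrix.mulVecLin_apply]
    rw [he]
    exact f.continuous_of_finiteDimensional.comp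
      (M.mulVecLin.continuous_of_finiteDimensional)
  have hφne : ∀ w ∈ chart f '' Ω, φ w ≠ 0 := by
    intro w hw
    obtain ⟨hw1, hwne, hwmem⟩ := (mem_chartImage_iff hΩ).1 hw
    have hmem2 : pact γ (Projectivization.mk ℝ w hwne) ∈ Ω := hγ.mem hwmem
    rw [pact_mk] at hmem2
    have havoid := hΩ.avoids _ (subset_closure hmem2)
    obtain ⟨a, ha⟩ := Projectivization.exists_smul_eq_mk_rep ℝ (M.mulVec w)
      (mulVec_ne_zero γ hwne)
    rw [← ha] at havoid
    intro h0
    apply havoid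
    have h0' : f (M.mulVec w) = 0 := h0
    rw [Units.smul_def, _root_.map_smul, smul_eq_mul, h0', mul_zero]
  have hivt : ∀ w₁ ∈ chart f '' Ω, ∀ w₂ ∈ chart f '' Ω, φ w₁ < 0 → 0 < φ w₂ → False := by
    intro w₁ hw₁ w₂ hw₂ h1 h2
    set ψ : ℝ → ℝ := fun t => φ ((1 - t) • w₁ + t • w₂) with hψ
    have hψcont : Continuous ψ := by
      apply hφcont.comp
      fun_prop
    have h0mem : (0:ℝ) ∈ Set.Icc (ψ 0) (ψ 1) := by
      constructor
      · show ψ 0 ≤ 0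
        have : ψ 0 = φ w₁ := by simp [hψ]
        rw [this]; exact h1.le
      · show (0:ℝ) ≤ ψ 1
        have : ψ 1 = φ w₂ := by simp [hψ]
        rw [this]; exact h2.le
    obtain ⟨t, htI, hzero⟩ := intermediate_value_Icc (by norm_num : (0:ℝ) ≤ 1)
      hψcont.continuousOn h0mem
    have htS : (1 - t) • w₁ + t • w₂ ∈ chart f '' Ω :=
      hΩ.convex hw₁ hw₂ (by linarith [htI.2]) htI.1 (by ring)
    exact hφne _ htS hzero
  obtain ⟨z₀, hz₀⟩ := hΩ.nonempty
  have hz₀S : chart f z₀ ∈ chart f '' Ω := Set.mem_image_of_mem _ hz₀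
  rcases lt_or_gt_of_ne (hφne _ hz₀S) with hneg | hpos
  · refine ⟨-1, by norm_num, fun w hw => ?_⟩
    rcases lt_or_gt_of_ne (hφne w hw) with h | h
    · have : 0 < -φ w := by linarith
      simpa using this
    · exact absurd (hivt _ hz₀S _ hw hneg h) (by simp)
  · refine ⟨1, by norm_num, fun w hw => ?_⟩
    rcases lt_or_gt_of_ne (hφne w hw) with h | h
    · exact absurd (hivt _ hw _ hz₀S h hpos) (by simp)
    · simpa using h

lemma chart_pact (hΩ : IsPCOWith f Ω) {γ : SL n} {z : PS n} (hz : z ∈ Ω) :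
    chart f (pact γ z) =
      (f ((γ : Matrix (Fin (n+1)) (Fin (n+1)) ℝ).mulVec (chart f z)))⁻¹ •
        ((γ : Matrix (Fin (n+1)) (Fin (n+1)) ℝ).mulVec (chart f z)) := by
  set M := (γ : Matrix (Fin (n+1)) (Fin (n+1)) ℝ) with hM
  have hrep : f z.rep ≠ 0 := hΩ.avoids z (subset_closure hz)
  have h1 : pact γ z = Projectivization.mk ℝ (M.mulVec z.rep)
      (mulVec_ne_zero γ z.rep_nonzero) := rfl
  rw [h1, chart_mk]
  have h2 : M.mulVec z.rep = (f z.rep) • (M.mulVec (chart f z)) := by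
    show M.mulVec z.rep = (f z.rep) • (M.mulVec ((f z.rep)⁻¹ • z.rep))
    rw [Matrix.mulVec_smul, smul_inv_smul₀ hrep]
  rw [h2, normalize_smul f _ _ hrep]

lemma sInf_comp (hΩ : IsPCOWith f Ω) {D : ℝ}
    (hD : ∀ v ∈ closure (chart f '' Ω), ‖v‖ ≤ D)
    {γ : SL n} (hγ : InAut γ Ω) {s : ℝ} (hsne : s ≠ 0)
    (hspos : ∀ w ∈ chart f '' Ω,
      0 < s * f ((γ : Matrix (Fin (n+1)) (Fin (n+1)) ℝ).mulVec w))
    {a b : PS n} (ha : a ∈ Ω) (hb : b ∈ Ω) :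
    sInf {l : ℝ | l • chart f (pact γ b) - chart f (pact γ a) ∈ closure (coneC f Ω)} ≤
      ((s * f ((γ : Matrix (Fin (n+1)) (Fin (n+1)) ℝ).mulVec (chart f b))) /
        (s * f ((γ : Matrix (Fin (n+1)) (Fin (n+1)) ℝ).mulVec (chart f a)))) *
      sInf {l : ℝ | l • chart f b - chart f a ∈ closure (coneC f Ω)} := by
  set M := (γ : Matrix (Fin (n+1)) (Fin (n+1)) ℝ) with hM
  set G : PV n →ₗ[ℝ] PV n := s • M.mulVecLin with hG
  have hGapp : ∀ w : PV n, G w = s • M.mulVec w := by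
    intro w
    simp [hG, Matrix.mulVecLin_apply]
  have haS : chart f a ∈ chart f '' Ω := Set.mem_image_of_mem _ ha
  have hbS : chart f b ∈ chart f '' Ω := Set.mem_image_of_mem _ hb
  have hca : 0 < s * f (M.mulVec (chart f a)) := hspos _ haS
  have hcb : 0 < s * f (M.mulVec (chart f b)) := hspos _ hbS
  -- G preserves the cone
  have hGcone : ∀ w ∈ coneC f Ω, G w ∈ coneC f Ω := by
    rintro w ⟨hw1, hw2⟩
    have hw₀S : (f w)⁻¹ • w ∈ chart f '' Ω := hw2
    obtain ⟨hw₀1, hw₀ne, hw₀mem⟩ := (mem_chartImage_iff hΩ).1 hw₀S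
    have hc₀ : 0 < s * f (M.mulVec ((f w)⁻¹ • w)) := hspos _ hw₀S
    have hGw₀ : G ((f w)⁻¹ • w) ∈ coneC f Ω := by
      constructor
      · show 0 < f (G ((f w)⁻¹ • w))
        rw [hGapp, _root_.map_smul, smul_eq_mul]
        exact hc₀
      · show (f (G ((f w)⁻¹ • w)))⁻¹ • G ((f w)⁻¹ • w) ∈ chart f '' Ω
        have he : (f (G ((f w)⁻¹ • w)))⁻¹ • G ((f w)⁻¹ • w)
            = (f (M.mulVec ((f w)⁻¹ • w)))⁻¹ • (M.mulVec ((f w)⁻¹ • w)) := by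
          rw [hGapp]
          exact normalize_smul f s _ hsne
        rw [he]
        have hmem : pact γ (Projectivization.mk ℝ ((f w)⁻¹ • w) hw₀ne) ∈ Ω :=
          hγ.mem hw₀mem
        have h3 : chart f (Projectivization.mk ℝ (M.mulVec ((f w)⁻¹ • w))
            (mulVec_ne_zero γ hw₀ne)) = (f (M.mulVec ((f w)⁻¹ • w)))⁻¹ •
            (M.mulVec ((f w)⁻¹ • w)) := chart_mk f _ _
        rw [← h3, ← pact_mk (hv := hw₀ne)]
        exact Set.mem_image_of_mem _ hmem
    have hGw : G w = (f w) • G ((f w)⁻¹ • w) := by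
      conv_lhs => rw [show w = (f w) • ((f w)⁻¹ • w) from (smul_inv_smul₀ (ne_of_gt hw1) w).symm]
      rw [_root_.map_smul]
    rw [hGw]
    exact smul_mem_coneC hGw₀ hw1
  have hGclos : ∀ w ∈ closure (coneC f Ω), G w ∈ closure (coneC f Ω) := by
    intro w hw
    have h1 : G '' closure (coneC f Ω) ⊆ closure (G '' coneC f Ω) :=
      image_closure_subset_closure_image G.continuous_of_finiteDimensional
    have h2 : closure (G '' coneC f Ω) ⊆ closure (coneC f Ω) :=
      closure_mono (by rintro _ ⟨w', hw', rfl⟩; exact hGcone w' hw')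
    exact h2 (h1 ⟨w, hw, rfl⟩)
  -- chart of images
  have hcha : chart f (pact γ a) = (s * f (M.mulVec (chart f a)))⁻¹ • G (chart f a) := by
    rw [chart_pact hΩ ha]
    have h1 : s * f (M.mulVec (chart f a)) = f (G (chart f a)) := by
      rw [hGapp, _root_.map_smul, smul_eq_mul]
    rw [h1, hGapp]
    exact (normalize_smul f s _ hsne).symm
  have hchb : chart f (pact γ b) = (s * f (M.mulVec (chart f b)))⁻¹ • G (chart f b) := by
    rw [chart_pact hΩ hb]
    have h1 : s * f (M.mulVec (chart f b)) = f (G (chart f b)) := by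
      rw [hGapp, _root_.map_smul, smul_eq_mul]
    rw [h1, hGapp]
    exact (normalize_smul f s _ hsne).symm
  -- membership transfer
  set ca := s * f (M.mulVec (chart f a)) with hcadef
  set cb := s * f (M.mulVec (chart f b)) with hcbdef
  have hahS : chart f (pact γ a) ∈ chart f '' Ω := Set.mem_image_of_mem _ (hγ.mem ha)
  have hbhS : chart f (pact γ b) ∈ chart f '' Ω := Set.mem_image_of_mem _ (hγ.mem hb)
  have hfah : f (chart f (pact γ a)) = 1 := f_eq_one_of_mem hΩ hahS
  have hfbh : f (chart f (pact γ b)) = 1 := f_eq_one_of_mem hΩ hbhS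
  have hsub : ∀ l ∈ {l : ℝ | l • chart f b - chart f a ∈ closure (coneC f Ω)},
      (cb / ca) * l ∈
        {l : ℝ | l • chart f (pact γ b) - chart f (pact γ a) ∈ closure (coneC f Ω)} := by
    intro l hl
    show ((cb / ca) * l) • chart f (pact γ b) - chart f (pact γ a) ∈ closure (coneC f Ω)
    have he : ((cb / ca) * l) • chart f (pact γ b) - chart f (pact γ a)
        = ca⁻¹ • G (l • chart f b - chart f a) := by
      rw [hcha, hchb, map_sub, _root_.map_smul]
      match_scalars <;> (field_simp; try ring)
    rw [he]
    exact smul_mem_closure_coneC (hGclos _ hl) (inv_pos.2 hca)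
  have hA'bdd : BddBelow
      {l : ℝ | l • chart f (pact γ b) - chart f (pact γ a) ∈ closure (coneC f Ω)} := by
    refine ⟨1, fun l hl => ?_⟩
    obtain ⟨h0, _⟩ := closure_coneC_bound hΩ hD hl
    have he : f (l • chart f (pact γ b) - chart f (pact γ a)) = l - 1 := by
      rw [map_sub, _root_.map_smul, hfah, hfbh, smul_eq_mul, mul_one]
    rw [he] at h0
    linarith
  obtain ⟨_, _, hA0ne⟩ := funk_eq hΩ hD haS hbS
  have h1 : ∀ l ∈ {l : ℝ | l • chart f b - chart f a ∈ closure (coneC f Ω)},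
      sInf {l : ℝ | l • chart f (pact γ b) - chart f (pact γ a) ∈ closure (coneC f Ω)}
        ≤ (cb / ca) * l := fun l hl => csInf_le hA'bdd (hsub l hl)
  have h2 : (ca / cb) *
      sInf {l : ℝ | l • chart f (pact γ b) - chart f (pact γ a) ∈ closure (coneC f Ω)} ≤
      sInf {l : ℝ | l • chart f b - chart f a ∈ closure (coneC f Ω)} := by
    apply le_csInf hA0ne
    intro l hl
    calc (ca / cb) *
        sInf {l : ℝ | l • chart f (pact γ b) - chart f (pact γ a) ∈ closure (coneC f Ω)}
        ≤ (ca / cb) * ((cb / ca) * l) :=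
          mul_le_mul_of_nonneg_left (h1 l hl) (div_pos hca hcb).le
      _ = l := by field_simp
  calc sInf {l : ℝ | l • chart f (pact γ b) - chart f (pact γ a) ∈ closure (coneC f Ω)}
      = (cb / ca) * ((ca / cb) *
        sInf {l : ℝ | l • chart f (pact γ b) - chart f (pact γ a) ∈ closure (coneC f Ω)}) := by
        field_simp
    _ ≤ (cb / ca) *
        sInf {l : ℝ | l • chart f b - chart f a ∈ closure (coneC f Ω)} :=
          mul_le_mul_of_nonneg_left h2 (div_pos hcb hca).le

lemma invariance_step (hΩ : IsPCOWith f Ω) {γ : SL n} (hγ : InAut γ Ω) {u v : PS n}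
    (hu : u ∈ Ω) (hv : v ∈ Ω) :
    hilbertDist (chart f '' Ω) (chart f (pact γ u)) (chart f (pact γ v)) ≤
      hilbertDist (chart f '' Ω) (chart f u) (chart f v) := by
  obtain ⟨D, hDpos, hD⟩ := exists_bound hΩ
  obtain ⟨s, hsne, hspos⟩ := exists_sign hΩ hγ
  set M := (γ : Matrix (Fin (n+1)) (Fin (n+1)) ℝ) with hM
  have huS : chart f u ∈ chart f '' Ω := Set.mem_image_of_mem _ hu
  have hvS : chart f v ∈ chart f '' Ω := Set.mem_image_of_mem _ hv
  have huhS : chart f (pact γ u) ∈ chart f '' Ω := Set.mem_image_of_mem _ (hγ.mem hu)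
  have hvhS : chart f (pact γ v) ∈ chart f '' Ω := Set.mem_image_of_mem _ (hγ.mem hv)
  have hcu : 0 < s * f (M.mulVec (chart f u)) := hspos _ huS
  have hcv : 0 < s * f (M.mulVec (chart f v)) := hspos _ hvS
  obtain ⟨q1, q1b, _⟩ := funk_eq hΩ hD huhS hvhS
  obtain ⟨q2, q2b, _⟩ := funk_eq hΩ hD hvhS huhS
  obtain ⟨p1, p1b, _⟩ := funk_eq hΩ hD huS hvS
  obtain ⟨p2, p2b, _⟩ := funk_eq hΩ hD hvS huS
  have hc1 := sInf_comp hΩ hD hγ hsne hspos hu hv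
  have hc2 := sInf_comp hΩ hD hγ hsne hspos hv hu
  unfold hilbertDist
  rw [q1, q2, p1, p2]
  set cu := s * f (M.mulVec (chart f u)) with hcudef
  set cv := s * f (M.mulVec (chart f v)) with hcvdef
  set m1 := sInf {l : ℝ | l • chart f v - chart f u ∈ closure (coneC f Ω)} with hm1
  set m2 := sInf {l : ℝ | l • chart f u - chart f v ∈ closure (coneC f Ω)} with hm2
  set m1' := sInf {l : ℝ | l • chart f (pact γ v) - chart f (pact γ u) ∈ closure (coneC f Ω)}
    with hm1'
  set m2' := sInf {l : ℝ | l • chart f (pact γ u) - chart f (pact γ v) ∈ closure (coneC f Ω)}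
    with hm2'
  have l1 : Real.log m1' ≤ Real.log (cv / cu) + Real.log m1 := by
    calc Real.log m1' ≤ Real.log ((cv / cu) * m1) :=
          Real.log_le_log (by linarith) hc1
      _ = Real.log (cv / cu) + Real.log m1 :=
          Real.log_mul (ne_of_gt (div_pos hcv hcu)) (by linarith)
  have l2 : Real.log m2' ≤ Real.log (cu / cv) + Real.log m2 := by
    calc Real.log m2' ≤ Real.log ((cu / cv) * m2) :=
          Real.log_le_log (by linarith) hc2
      _ = Real.log (cu / cv) + Real.log m2 :=
          Real.log_mul (ne_of_gt (div_pos hcu hcv)) (by linarith)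
  have hlogs : Real.log (cv / cu) + Real.log (cu / cv) = 0 := by
    rw [Real.log_div (ne_of_gt hcv) (ne_of_gt hcu), Real.log_div (ne_of_gt hcu) (ne_of_gt hcv)]
    ring
  linarith

end Invariance

section Assembly

variable {n : ℕ} {f : PV n →ₗ[ℝ] ℝ} {Ω : Set (PS n)}

lemma hilbert_pow_le (hΩ : IsPCOWith f Ω) {γ : SL n} (hγ : InAut γ Ω) {x y : PS n}
    (hx : x ∈ Ω) (hy : y ∈ Ω) (m : ℕ) :
    hilbertDist (chart f '' Ω) (chart f (pact (γ ^ m) x)) (chart f (pact (γ ^ m) y)) ≤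
      hilbertDist (chart f '' Ω) (chart f x) (chart f y) := by
  induction m with
  | zero => rw [pow_zero, pact_one, pact_one]
  | succ m ih =>
      rw [pow_succ', pact_mul, pact_mul]
      exact (invariance_step hΩ hγ (hγ.pow_mem m hx) (hγ.pow_mem m hy)).trans ih

lemma uniform_delta (hΩ : IsPCOWith f Ω) {T : Set (PV n)} (hT : IsCompact T)
    (hTS : T ⊆ chart f '' Ω) :
    ∃ δ > 0, ∀ w ∈ T, ∀ u : PV n, f u = 1 → dist u w ≤ δ → u ∈ chart f '' Ω := by
  set O : Set (PV n) := Subtype.val '' ((Projectivization.mk' ℝ) ⁻¹' Ω) with hO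
  have hOopen : IsOpen O := (isOpen_compl_singleton (x := (0:PV n))).isOpenMap_subtype_val _
    ((continuous_mk' n).isOpen_preimage Ω hΩ.isOpen)
  have hSO : ∀ u : PV n, f u = 1 → u ∈ O → u ∈ chart f '' Ω := by
    rintro u hu1 ⟨⟨u', hu'⟩, humem, heq⟩
    rw [mem_chartImage_iff hΩ]
    subst heq
    exact ⟨hu1, hu', by simpa [Set.mem_preimage, Projectivization.mk'_eq_mk] using humem⟩
  have hTO : T ⊆ O := by
    intro w hw
    obtain ⟨h1, hne, hmem⟩ := (mem_chartImage_iff hΩ).1 (hTS hw)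
    exact ⟨⟨w, hne⟩, by simpa [Set.mem_preimage, Projectivization.mk'_eq_mk] using hmem, rfl⟩
  obtain ⟨δ, hδpos, hδ⟩ := hT.exists_cthickening_subset_open hOopen hTO
  refine ⟨δ, hδpos, fun w hw u hu1 hud => ?_⟩
  exact hSO u hu1 (hδ (Metric.mem_cthickening_of_dist_le u w δ T hw hud))

lemma funk_bound (hΩ : IsPCOWith f Ω) {D δ : ℝ} (hDpos : 0 < D)
    (hD : ∀ v ∈ closure (chart f '' Ω), ‖v‖ ≤ D) (hδpos : 0 < δ)
    {x y : PV n} (hx : x ∈ chart f '' Ω) (hy : y ∈ chart f '' Ω)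
    (hball : ∀ u : PV n, f u = 1 → dist u y ≤ δ → u ∈ chart f '' Ω) :
    funkDist (chart f '' Ω) x y ≤ Real.log ((2 * D + δ) / δ) := by
  have hlog0 : 0 ≤ Real.log ((2 * D + δ) / δ) := by
    apply Real.log_nonneg
    rw [le_div_iff₀ hδpos]
    nlinarith
  rcases eq_or_ne y x with rfl | hne
  · show - Real.log (1 - gauge _ (y - y)) ≤ _
    rw [sub_self, gauge_zero]
    norm_num
    exact hlog0
  have hyx : (0:ℝ) < ‖y - x‖ := by rw [norm_pos_iff]; exact sub_ne_zero_of_ne hne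
  set r : ℝ := ‖y - x‖ / (‖y - x‖ + δ) with hr
  have hrpos : 0 < r := by positivity
  have hr1 : r < 1 := by
    rw [hr, div_lt_one (by positivity)]
    linarith
  have hP : x + r⁻¹ • (y - x) ∈ chart f '' Ω := by
    have hrinv : r⁻¹ = 1 + δ / ‖y - x‖ := by
      rw [hr, inv_div]
      field_simp
    apply hball
    · have hfx : f x = 1 := f_eq_one_of_mem hΩ hx
      have hfy : f y = 1 := f_eq_one_of_mem hΩ hy
      rw [map_add, _root_.map_smul, map_sub, hfx, hfy]
      simp
    · have hpt : x + r⁻¹ • (y - x) = y + (δ / ‖y - x‖) • (y - x) := by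
        rw [hrinv, add_smul, one_smul]
        abel
      rw [hpt, dist_eq_norm, add_sub_cancel_left, norm_smul, Real.norm_eq_abs,
        abs_of_pos (by positivity)]
      rw [div_mul_eq_mul_div, mul_comm, ← div_mul_eq_mul_div, div_self (ne_of_gt hyx),
        one_mul]
  have hgle : gauge ((fun z => z - x) '' (chart f '' Ω)) (y - x) ≤ r :=
    gauge_le_aux hΩ hrpos hP
  show - Real.log (1 - gauge ((fun z => z - x) '' (chart f '' Ω)) (y - x)) ≤ _
  have h1r : 0 < 1 - r := by linarith
  have h1g : 1 - r ≤ 1 - gauge ((fun z => z - x) '' (chart f '' Ω)) (y - x) := by linarith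
  have hlog1 : Real.log (1 - r) ≤ Real.log (1 - gauge ((fun z => z - x) '' (chart f '' Ω))
      (y - x)) := Real.log_le_log h1r h1g
  have h1req : 1 - r = δ / (‖y - x‖ + δ) := by
    rw [hr]
    field_simp
    ring
  have hfin : - Real.log (1 - r) ≤ Real.log ((2 * D + δ) / δ) := by
    rw [h1req, ← Real.log_inv, inv_div]
    apply Real.log_le_log (by positivity)
    rw [div_le_div_iff₀ (by positivity) (by positivity)]
    have hyD : ‖y - x‖ ≤ 2 * D := by
      calc ‖y - x‖ ≤ ‖y‖ + ‖x‖ := norm_sub_le _ _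
        _ ≤ D + D := add_le_add (hD y (subset_closure hy)) (hD x (subset_closure hx))
        _ = 2 * D := by ring
    nlinarith
  linarith

lemma mk_closure_mem (hΩ : IsPCOWith f Ω) {q : PV n} (hq : q ∈ closure (chart f '' Ω)) :
    Projectivization.mk ℝ q (ne_zero_of_closure hΩ hq) ∈ closure Ω := by
  obtain ⟨u, huS, hulim⟩ := mem_closure_iff_seq_limit.1 hq
  have hune : ∀ j, u j ≠ 0 := fun j => ne_zero_of_closure hΩ (subset_closure (huS j))
  have hmk := tendsto_mk hune (ne_zero_of_closure hΩ hq) hulim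
  refine mem_closure_of_tendsto hmk (Filter.Eventually.of_forall fun j => ?_)
  obtain ⟨_, hvne, hvmem⟩ := (mem_chartImage_iff hΩ).1 (huS j)
  exact hvmem

lemma frontier_of_closure_not_mem (hΩ : IsPCOWith f Ω) {q : PV n}
    (hq : q ∈ closure (chart f '' Ω)) (hqn : q ∉ chart f '' Ω) :
    Projectivization.mk ℝ q (ne_zero_of_closure hΩ hq) ∈ frontier Ω ∧
      chart f (Projectivization.mk ℝ q (ne_zero_of_closure hΩ hq)) = q := by
  have hfq : f q = 1 := f_eq_one_of_closure hΩ hq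
  have hch : chart f (Projectivization.mk ℝ q (ne_zero_of_closure hΩ hq)) = q := by
    rw [chart_mk, hfq]
    simp
  refine ⟨?_, hch⟩
  rw [hΩ.isOpen.frontier_eq]
  refine ⟨mk_closure_mem hΩ hq, fun hmem => hqn ?_⟩
  rw [← hch]
  exact Set.mem_image_of_mem _ hmem

lemma no_bounded_escape (hΩ : IsPCOWith f Ω) {p : PS n} (hp : IsExtremalPointW f Ω p)
    (hπnotS : chart f p ∉ chart f '' Ω)
    {a b : ℕ → PV n} (haS : ∀ k, a k ∈ chart f '' Ω) (hbS : ∀ k, b k ∈ chart f '' Ω)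
    (halim : Filter.Tendsto a Filter.atTop (nhds (chart f p)))
    {ε : ℝ} (hε : 0 < ε) (hbfar : ∀ k, ε ≤ dist (chart f p) (b k))
    {R : ℝ} (hdbound : ∀ k, hilbertDist (chart f '' Ω) (a k) (b k) ≤ R) : False := by
  obtain ⟨D, hDpos, hD⟩ := exists_bound hΩ
  set S := chart f '' Ω with hSdef
  set π := chart f p with hπ
  -- shift so that a is ε/2-close to π
  have hev : ∀ᶠ k in Filter.atTop, dist (a k) π < ε / 2 :=
    Metric.tendsto_nhds.1 halim (ε / 2) (by positivity)
  obtain ⟨k₀, hk₀⟩ := Filter.eventually_atTop.1 hev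
  set A : ℕ → PV n := fun k => a (k + k₀) with hA
  set B : ℕ → PV n := fun k => b (k + k₀) with hB
  have hAS : ∀ k, A k ∈ S := fun k => haS _
  have hBS : ∀ k, B k ∈ S := fun k => hbS _
  have hAlim : Filter.Tendsto A Filter.atTop (nhds π) :=
    halim.comp (tendsto_add_atTop_nat k₀)
  have hAclose : ∀ k, dist (A k) π < ε / 2 := fun k => hk₀ _ (Nat.le_add_left _ _)
  have hBfar : ∀ k, ε ≤ dist π (B k) := fun k => hbfar _
  have hABd : ∀ k, hilbertDist S (A k) (B k) ≤ R := fun k => hdbound _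
  have hsep : ∀ k, ε / 2 ≤ ‖A k - B k‖ := by
    intro k
    have h1 : dist π (B k) ≤ dist π (A k) + dist (A k) (B k) := dist_triangle _ _ _
    have h2 : dist π (A k) = dist (A k) π := dist_comm _ _
    have h3 : dist (A k) (B k) = ‖A k - B k‖ := dist_eq_norm _ _
    linarith [hBfar k, hAclose k]
  -- gauge quantities
  set g : ℕ → ℝ := fun k => gauge ((fun z => z - B k) '' S) (A k - B k) with hg
  have hg1 : ∀ k, g k < 1 := fun k => gauge_lt_one hΩ (hBS k) (hAS k)
  have hg0 : ∀ k, 0 ≤ g k := fun k => gauge_nonneg _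
  set c₁ : ℝ := (ε / 2) / (2 * D + 1) with hc₁
  have hc₁pos : 0 < c₁ := by positivity
  have hglow : ∀ k, c₁ ≤ g k := by
    intro k
    have := gauge_pos_aux hΩ hD (hBS k) (hAS k)
    have h2 : c₁ ≤ ‖A k - B k‖ / (2 * D + 1) := by
      rw [hc₁]
      gcongr
      exact hsep k
    linarith
  have hgpos : ∀ k, 0 < g k := fun k => lt_of_lt_of_le hc₁pos (hglow k)
  -- funk bound gives 1 - g k bounded below
  have h1mg : ∀ k, Real.exp (-(2 * R)) ≤ 1 - g k := by
    intro k
    have hfba : funkDist S (B k) (A k) = - Real.log (1 - g k) := rfl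
    have hfab : 0 ≤ funkDist S (A k) (B k) := by
      show 0 ≤ - Real.log (1 - gauge ((fun z => z - A k) '' S) (B k - A k))
      have hlt := gauge_lt_one hΩ (hAS k) (hBS k)
      have hnn := gauge_nonneg (s := (fun z => z - A k) '' S) (B k - A k)
      have := Real.log_nonpos
        (x := 1 - gauge ((fun z => z - A k) '' S) (B k - A k)) (by linarith) (by linarith)
      linarith
    have hhil : (funkDist S (A k) (B k) + funkDist S (B k) (A k)) / 2 ≤ R := hABd k
    have hfba2 : - Real.log (1 - g k) ≤ 2 * R := by
      rw [← hfba]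
      linarith
    have h1gk : 0 < 1 - g k := by linarith [hg1 k]
    calc Real.exp (-(2 * R)) ≤ Real.exp (Real.log (1 - g k)) :=
          Real.exp_le_exp.2 (by linarith)
      _ = 1 - g k := Real.exp_log h1gk
  set c₂ : ℝ := Real.exp (-(2 * R)) * (ε / 2) with hc₂
  have hc₂pos : 0 < c₂ := by positivity
  -- endpoint w
  set w : ℕ → PV n := fun k => B k + (g k)⁻¹ • (A k - B k) with hw
  have hwcl : ∀ k, w k ∈ closure S := fun k =>
    gauge_endpoint_mem_closure hΩ (hBS k) (hAS k) (hgpos k)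
  have hwfar : ∀ k, c₂ ≤ ‖w k - A k‖ := by
    intro k
    have he : w k - A k = ((g k)⁻¹ - 1) • (A k - B k) := by
      rw [hw]
      show B k + (g k)⁻¹ • (A k - B k) - A k = ((g k)⁻¹ - 1) • (A k - B k)
      rw [sub_smul, one_smul]
      abel
    rw [he, norm_smul, Real.norm_eq_abs]
    have hinv1 : 1 ≤ (g k)⁻¹ := one_le_inv₀ (hgpos k) |>.2 (hg1 k).le
    rw [abs_of_nonneg (by linarith)]
    have h1 : (g k)⁻¹ - 1 = (1 - g k) / g k := by
      rw [sub_div, div_self (ne_of_gt (hgpos k)), one_div]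
    have h2 : (1 - g k) / g k ≥ 1 - g k := by
      rw [ge_iff_le, le_div_iff₀ (hgpos k)]
      nlinarith [hg1 k, hg0 k]
    calc c₂ = Real.exp (-(2 * R)) * (ε / 2) := hc₂
      _ ≤ (1 - g k) * ‖A k - B k‖ := by
          apply mul_le_mul (h1mg k) (hsep k) (by positivity) (by linarith [hg1 k])
      _ ≤ ((g k)⁻¹ - 1) * ‖A k - B k‖ := by
          apply mul_le_mul_of_nonneg_right _ (norm_nonneg _)
          rw [h1]
          linarith
  -- extract convergent subsequences
  have hSbnd : Bornology.IsBounded (closure S) := hΩ.bounded.closure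
  obtain ⟨q, hqcl, ψ₁, hψ₁, hBlim⟩ := tendsto_subseq_of_bounded hSbnd
    (fun k => subset_closure (hBS k))
  obtain ⟨wq, hwqcl0, ψ₂, hψ₂, hWlim⟩ := tendsto_subseq_of_bounded hSbnd
    (fun k => hwcl (ψ₁ k))
  obtain ⟨gl, hglmem, ψ₃, hψ₃, hGlim⟩ := tendsto_subseq_of_bounded
    (Metric.isBounded_Icc c₁ 1) (x := fun k => g (ψ₁ (ψ₂ k)))
    (fun k => ⟨hglow _, (hg1 _).le⟩)
  have hqcl' : q ∈ closure S := by rwa [closure_closure] at hqcl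
  have hwqcl : wq ∈ closure S := by rwa [closure_closure] at hwqcl0
  have hglI : gl ∈ Set.Icc c₁ 1 := by
    rwa [closure_Icc] at hglmem
  set Φ : ℕ → ℕ := fun k => ψ₁ (ψ₂ (ψ₃ k)) with hΦ
  have hΦmono : StrictMono Φ := hψ₁.comp (hψ₂.comp hψ₃)
  have hBlim' : Filter.Tendsto (fun k => B (Φ k)) Filter.atTop (nhds q) :=
    hBlim.comp ((hψ₂.comp hψ₃).tendsto_atTop)
  have hWlim' : Filter.Tendsto (fun k => w (Φ k)) Filter.atTop (nhds wq) :=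
    hWlim.comp (hψ₃.tendsto_atTop)
  have hGlim' : Filter.Tendsto (fun k => g (Φ k)) Filter.atTop (nhds gl) := hGlim
  have hAlim' : Filter.Tendsto (fun k => A (Φ k)) Filter.atTop (nhds π) :=
    hAlim.comp (hΦmono.tendsto_atTop)
  -- limit identity : π - q = gl • (wq - q)
  have hid : ∀ k, A (Φ k) - B (Φ k) = g (Φ k) • (w (Φ k) - B (Φ k)) := by
    intro k
    show A (Φ k) - B (Φ k) = g (Φ k) • (B (Φ k) + (g (Φ k))⁻¹ • (A (Φ k) - B (Φ k)) - B (Φ k))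
    rw [add_sub_cancel_left, smul_smul, mul_inv_cancel₀ (ne_of_gt (hgpos _)), one_smul]
  have hlim1 : Filter.Tendsto (fun k => A (Φ k) - B (Φ k)) Filter.atTop (nhds (π - q)) :=
    hAlim'.sub hBlim'
  have hlim2 : Filter.Tendsto (fun k => g (Φ k) • (w (Φ k) - B (Φ k))) Filter.atTop
      (nhds (gl • (wq - q))) := hGlim'.smul (hWlim'.sub hBlim')
  have heq : π - q = gl • (wq - q) := by
    apply tendsto_nhds_unique hlim1
    have : (fun k => A (Φ k) - B (Φ k)) = fun k => g (Φ k) • (w (Φ k) - B (Φ k)) := by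
      funext k; exact hid k
    rwa [this]
  -- distances in the limit
  have hqfar : ε ≤ dist π q :=
    ge_of_tendsto' (tendsto_const_nhds.dist hBlim') (fun k => hBfar (Φ k))
  have hwqfar : c₂ ≤ ‖wq - π‖ :=
    ge_of_tendsto' ((hWlim'.sub hAlim').norm) (fun k => hwfar (Φ k))
  have hglpos : 0 < gl := lt_of_lt_of_le hc₁pos hglI.1
  have hgl1 : gl < 1 := by
    rcases lt_or_eq_of_le hglI.2 with h | h
    · exact h
    · exfalso
      rw [h, one_smul] at heq
      have hπwq : π = wq := sub_left_inj.1 heq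
      rw [← hπwq] at hwqfar
      simp at hwqfar
      linarith
  -- π lies strictly between q and wq
  have hπseg : π = q + gl • (wq - q) := by
    have : π = (π - q) + q := by abel
    rw [this, heq]
    abel
  -- case analysis
  by_cases hqS : q ∈ S
  · apply hπnotS
    have hmem : q + gl • (wq - q) ∈ S := seg_mem hΩ hqS hwqcl hglpos.le hgl1
    rw [← hπseg] at hmem
    exact hmem
  by_cases hwqS : wq ∈ S
  · apply hπnotS
    have hπseg2 : π = wq + (1 - gl) • (q - wq) := by
      rw [hπseg]
      module
    have hmem : wq + (1 - gl) • (q - wq) ∈ S :=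
      seg_mem hΩ hwqS hqcl' (by linarith) (by linarith)
    rw [← hπseg2] at hmem
    exact hmem
  -- both q and wq on the boundary : use extremality
  obtain ⟨hQfront, hQchart⟩ := frontier_of_closure_not_mem hΩ hqcl' hqS
  obtain ⟨hWfront, hWchart⟩ := frontier_of_closure_not_mem hΩ hwqcl hwqS
  have hπseg3 : π ∈ openSegment ℝ q wq :=
    ⟨1 - gl, gl, by linarith, hglpos, by ring, by rw [hπseg]; module⟩
  have hQW := hp.2 _ hQfront _ hWfront (by rwa [hQchart, hWchart])
  have hqwq : q = wq := by
    rw [← hQchart, ← hWchart, hQW]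
  rw [hqwq, openSegment_same] at hπseg3
  have hπwq : π = wq := hπseg3
  rw [← hπwq] at hwqfar
  simp at hwqfar
  linarith

end Assembly

section Final

variable {n : ℕ} {f : PV n →ₗ[ℝ] ℝ} {Ω : Set (PS n)}

lemma exists_R (hΩ : IsPCOWith f Ω) {x : PS n} (hx : x ∈ Ω) {K : Set (PS n)} (hK : K ⊆ Ω)
    (hKc : IsCompact K) :
    ∃ R : ℝ, ∀ y ∈ K, hilbertDist (chart f '' Ω) (chart f x) (chart f y) ≤ R := by
  obtain ⟨D, hDpos, hD⟩ := exists_bound hΩ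
  have hchcont : ContinuousOn (chart f) K := fun z hz =>
    (continuousAt_chart f z (hΩ.avoids z (subset_closure (hK hz)))).continuousWithinAt
  have hT : IsCompact (chart f '' K) := hKc.image_of_continuousOn hchcont
  have hT' : IsCompact (insert (chart f x) (chart f '' K)) := hT.insert _
  have hT'S : insert (chart f x) (chart f '' K) ⊆ chart f '' Ω := by
    rintro w (rfl | ⟨z, hz, rfl⟩)
    · exact Set.mem_image_of_mem _ hx
    · exact Set.mem_image_of_mem _ (hK hz)
  obtain ⟨δ, hδpos, hδ⟩ := uniform_delta hΩ hT' hT'S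
  refine ⟨Real.log ((2 * D + δ) / δ), fun y hy => ?_⟩
  have hxS : chart f x ∈ chart f '' Ω := Set.mem_image_of_mem _ hx
  have hyS : chart f y ∈ chart f '' Ω := Set.mem_image_of_mem _ (hK hy)
  have h1 : funkDist (chart f '' Ω) (chart f x) (chart f y) ≤ Real.log ((2*D+δ)/δ) :=
    funk_bound hΩ hDpos hD hδpos hxS hyS
      (fun u hu1 hud =>
        hδ _ (Set.mem_insert_iff.2 (Or.inr (Set.mem_image_of_mem _ hy))) u hu1 hud)
  have h2 : funkDist (chart f '' Ω) (chart f y) (chart f x) ≤ Real.log ((2*D+δ)/δ) :=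
    funk_bound hΩ hDpos hD hδpos hyS hxS
      (fun u hu1 hud => hδ _ (Set.mem_insert _ _) u hu1 hud)
  show (funkDist _ _ _ + funkDist _ _ _) / 2 ≤ _
  linarith

end Final


/-- If for some `x ∈ Ω` the orbit `(γ^m · x)` converges to an extremal boundary point `p`,
then `(γ^m)` converges to the constant map `p` uniformly on compact subsets of `Ω`
(read in the affine chart given by `f`). -/
theorem tendstoUniformlyOn_of_orbit_tendsto_extremal (n : ℕ) (f : PV n →ₗ[ℝ] ℝ)
    (Ω : Set (PS n)) (hΩ : IsPCOWith f Ω) (γ : SL n) (hγ : InAut γ Ω)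
    (x : PS n) (hx : x ∈ Ω) (p : PS n) (hp : IsExtremalPointW f Ω p)
    (horb : Tendsto (fun m : ℕ => pact (γ ^ m) x) atTop (nhds p)) :
    ∀ K : Set (PS n), K ⊆ Ω → IsCompact K →
      TendstoUniformlyOn (fun (m : ℕ) (y : PS n) => chart f (pact (γ ^ m) y))
        (fun _ => chart f p) atTop K := by
  intro K hK hKc
  have hfp : f p.rep ≠ 0 := hΩ.avoids p (frontier_subset_closure hp.1)
  have hπnotS : chart f p ∉ chart f '' Ω := by
    intro hmem
    obtain ⟨h1, hne, hmkmem⟩ := (mem_chartImage_iff hΩ).1 hmem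
    have hmk : Projectivization.mk ℝ (chart f p) hne = p := mk_chart f p hfp
    rw [hmk] at hmkmem
    have hpnot : p ∉ Ω := by
      have h2 := hp.1
      rw [hΩ.isOpen.frontier_eq] at h2
      exact h2.2
    exact hpnot hmkmem
  have horbchart : Filter.Tendsto (fun m : ℕ => chart f (pact (γ ^ m) x)) Filter.atTop
      (nhds (chart f p)) := ((continuousAt_chart f p hfp).tendsto).comp horb
  rw [Metric.tendstoUniformlyOn_iff]
  by_contra hcon
  push_neg at hcon
  obtain ⟨ε, hε, hfreq⟩ := hcon
  obtain ⟨φ, hφmono, hφ⟩ := Filter.extraction_of_frequently_atTop hfreq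
  have hφ' : ∀ k, ∃ z ∈ K, ε ≤ dist (chart f p) (chart f (pact (γ ^ (φ k)) z)) := by
    intro k
    have h3 := hφ k
    exact h3
  choose y hyK hyd using hφ'
  obtain ⟨R, hR⟩ := exists_R hΩ hx hK hKc
  exact no_bounded_escape hΩ hp hπnotS
    (a := fun k => chart f (pact (γ ^ (φ k)) x))
    (b := fun k => chart f (pact (γ ^ (φ k)) (y k)))
    (fun k => Set.mem_image_of_mem _ (hγ.pow_mem _ hx))
    (fun k => Set.mem_image_of_mem _ (hγ.pow_mem _ (hK (hyK k))))
    (horbchart.comp (hφmono.tendsto_atTop))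
    hε hyd (R := R)
    (fun k => (hilbert_pow_le hΩ hγ hx (hK (hyK k)) (φ k)).trans (hR (y k) (hyK k)))
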